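/- Let a, b > 0 and H, G satisfy (H1). Suppose u₀, v₀, u₁, v₁ > 0 satisfy a u₀ - H(v₀) ≥ 0, b v₀ - G(u₀) ≥ 0, and a u₁ = H(v₁), b v₁ = G(u₁) (so (u₁,v₁) is the unique positive equilibrium). If u₀ < u₁ and v₀ < v₁, then a contradiction follows; i.e., no positive pair (u₀, v₀) with u₀ < U, v₀ < V can satisfy both a u₀ ≥ H(v₀) and b v₀ ≥ G(u₀). -/
import Mathlib


open Set

theorem stmt_5 (a b : ℝ) (ha : 0 < a) (hb : 0 < b)
    (H G H' G' : ℝ → ℝ)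
    (hH : ∀ z ∈ Ici (0:ℝ), HasDerivWithinAt H (H' z) (Ici 0) z)
    (hG : ∀ z ∈ Ici (0:ℝ), HasDerivWithinAt G (G' z) (Ici 0) z)
    (hH'c : ContinuousOn H' (Ici 0)) (hG'c : ContinuousOn G' (Ici 0))
    (hH0 : H 0 = 0) (hG0 : G 0 = 0)
    (hH'pos : ∀ z ∈ Ici (0:ℝ), 0 < H' z) (hG'pos : ∀ z ∈ Ici (0:ℝ), 0 < G' z)
    (hHdec : AntitoneOn (fun z => H z / z) (Ioi 0))
    (hGdec : StrictAntiOn (fun z => G z / z) (Ioi 0))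
    (hhat : ∃ zh > 0, G (H zh / a) < b * zh)
    (u₀ v₀ u₁ v₁ : ℝ)
    (hu₀ : 0 < u₀) (hv₀ : 0 < v₀) (hu₁ : 0 < u₁) (hv₁ : 0 < v₁)
    (hineq1 : 0 ≤ a * u₀ - H v₀) (hineq2 : 0 ≤ b * v₀ - G u₀)
    (heq1 : a * u₁ = H v₁) (heq2 : b * v₁ = G u₁)
    (hu : u₀ < u₁) (hv : v₀ < v₁) :
    False := by
  have h1 : H v₁ / v₁ ≤ H v₀ / v₀ := hHdec (mem_Ioi.2 hv₀) (mem_Ioi.2 hv₁) hv.le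
  have h2 : G u₁ / u₁ < G u₀ / u₀ := hGdec (mem_Ioi.2 hu₀) (mem_Ioi.2 hu₁) hu
  rw [div_le_div_iff₀ hv₁ hv₀] at h1
  rw [div_lt_div_iff₀ hu₁ hu₀] at h2
  have k1 : 0 ≤ (a * u₀ - H v₀) * v₁ := mul_nonneg hineq1 hv₁.le
  have k2 : 0 ≤ (b * v₀ - G u₀) * u₁ := mul_nonneg hineq2 hu₁.le
  have m1 : u₁ * v₀ ≤ u₀ * v₁ := by nlinarith
  have m2 : u₀ * v₁ < u₁ * v₀ := by nlinarith
  linarith
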